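/- Suppose the threshold-γ policy is used, δ ≥ 0, Q^r_k − Q̂^r_k ≤ δ for all k ≥ k0, and Q̂^r_{k0} ≤ γ + 1 for some k0 ≥ 1. Then 0 ≤ Q^r_k ≤ γ + δ + 1 for all k ≥ k0. In particular, if the initial condition is q0 = 0 (so that Q̂^r_1 = 0 ≤ γ + 1) and Q^r_k − Q̂^r_k ≤ δ for all k ≥ 1, then 0 ≤ Q^r_k ≤ γ + δ + 1 for all k ≥ 1. -/

import Mathlib

lemma aux_bound_stmt6 (γ δ : ℝ) (hγ : 0 ≤ γ) (hδ : 0 ≤ δ) (q0 : ℕ)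
    (S C X Qr Qhat : ℤ → ℝ)
    (hS : ∀ k, S k = 0 ∨ S k = 1)
    (hC : ∀ k, C k = 0 ∨ C k = 1)
    (hX : ∀ k, X k = 0 ∨ X k = 1)
    (hQinit : ∀ j ≤ (1 : ℤ), Qr j = (q0 : ℝ))
    (hQrec : ∀ k ≥ (1 : ℤ), Qr (k + 1) = max 0 (Qr k + S k * X k - C k * (1 - X k)))
    (hpolC : ∀ k ≥ (1 : ℤ), C k = if γ < Qhat k then 1 else 0)
    (hpolS : ∀ k ≥ (1 : ℤ), S k = 1 - C k)
    (k0 : ℤ) (hk0 : 1 ≤ k0)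
    (hacc : ∀ k ≥ k0, Qr k - Qhat k ≤ δ)
    (hstart : Qhat k0 ≤ γ + 1) :
    ∀ k ≥ k0, 0 ≤ Qr k ∧ Qr k ≤ γ + δ + 1 := by
  have hbase0 : 0 ≤ Qr k0 := by
    rcases eq_or_lt_of_le hk0 with h | h
    · rw [hQinit k0 (le_of_eq h.symm)]; positivity
    · have h1 : (1:ℤ) ≤ k0 - 1 := by omega
      have := hQrec (k0 - 1) h1
      rw [show k0 - 1 + 1 = k0 by ring] at this
      rw [this]; exact le_max_left _ _
  refine fun k hk => Int.le_induction (motive := fun k _ => 0 ≤ Qr k ∧ Qr k ≤ γ + δ + 1) ?_ ?_ k hk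
  · refine ⟨hbase0, ?_⟩
    have := hacc k0 le_rfl
    linarith
  · intro k hk ih
    have hk1 : (1:ℤ) ≤ k := le_trans hk0 hk
    have hrec := hQrec k hk1
    constructor
    · rw [hrec]; exact le_max_left _ _
    · rw [hrec]
      apply max_le (by linarith)
      have hX01 : 0 ≤ X k ∧ X k ≤ 1 := by rcases hX k with h|h <;> simp [h]
      have hC01 : 0 ≤ C k ∧ C k ≤ 1 := by rcases hC k with h|h <;> simp [h]
      have hS01 : 0 ≤ S k ∧ S k ≤ 1 := by rcases hS k with h|h <;> simp [h]
      have hCX : 0 ≤ C k * (1 - X k) := mul_nonneg hC01.1 (by linarith [hX01.2])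
      by_cases hcase : γ < Qhat k
      · have hCk : C k = 1 := by rw [hpolC k hk1]; simp [hcase]
        have hSk : S k = 0 := by rw [hpolS k hk1, hCk]; ring
        rw [hSk]
        simp only [zero_mul]
        linarith [ih.2]
      · have := hacc k hk
        push_neg at hcase
        have hSX : S k * X k ≤ 1 :=
          calc S k * X k ≤ 1 * 1 := mul_le_mul hS01.2 hX01.2 hX01.1 zero_le_one
          _ = 1 := by ring
        linarith


/-- Under the threshold-`γ` policy, if the estimator is accurate to within `δ`
from slot `k0` on and `Q̂^r_{k0} ≤ γ + 1`, then `0 ≤ Q^r_k ≤ γ + δ + 1` for all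
`k ≥ k0`.  In particular, if `q0 = 0` and the estimator is accurate to within
`δ` for all `k ≥ 1`, then `0 ≤ Q^r_k ≤ γ + δ + 1` for all `k ≥ 1`. -/
theorem stmt_6 (d : ℤ) (hd : 1 ≤ d) (p : ℝ) (hp0 : 0 ≤ p) (hp1 : p ≤ 1) (q0 : ℕ)
    (γ δ : ℝ) (hγ : 0 ≤ γ) (hδ : 0 ≤ δ)
    (S C X Qr Qhat : ℤ → ℝ)
    (hS : ∀ k, S k = 0 ∨ S k = 1)
    (hC : ∀ k, C k = 0 ∨ C k = 1)
    (hX : ∀ k, X k = 0 ∨ X k = 1)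
    (hSC : ∀ k, S k + C k ≤ 1)
    (hS0 : ∀ j ≤ (0 : ℤ), S j = 0)
    (hC0 : ∀ j ≤ (0 : ℤ), C j = 0)
    (hX0 : ∀ j ≤ (0 : ℤ), X j = 0)
    (hQinit : ∀ j ≤ (1 : ℤ), Qr j = (q0 : ℝ))
    (hQrec : ∀ k ≥ (1 : ℤ), Qr (k + 1) = max 0 (Qr k + S k * X k - C k * (1 - X k)))
    (hQhat : ∀ k ≥ (1 : ℤ),
      Qhat k = Qr (k - d) + ∑ j ∈ Finset.Ico (k - d) k, (S j * p - C j * (1 - p)))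
    (hpolC : ∀ k ≥ (1 : ℤ), C k = if γ < Qhat k then 1 else 0)
    (hpolS : ∀ k ≥ (1 : ℤ), S k = 1 - C k)
    (k0 : ℤ) (hk0 : 1 ≤ k0)
    (hacc : ∀ k ≥ k0, Qr k - Qhat k ≤ δ)
    (hstart : Qhat k0 ≤ γ + 1) :
    (∀ k ≥ k0, 0 ≤ Qr k ∧ Qr k ≤ γ + δ + 1) ∧
    (q0 = 0 → (∀ k ≥ (1 : ℤ), Qr k - Qhat k ≤ δ) →
      ∀ k ≥ (1 : ℤ), 0 ≤ Qr k ∧ Qr k ≤ γ + δ + 1) := by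
  constructor
  · exact aux_bound_stmt6 γ δ hγ hδ q0 S C X Qr Qhat hS hC hX hQinit hQrec hpolC hpolS
      k0 hk0 hacc hstart
  · intro hq0 hacc1
    have hQhat1 : Qhat 1 = 0 := by
      rw [hQhat 1 le_rfl]
      have h1 : Qr (1 - d) = (q0 : ℝ) := hQinit _ (by omega)
      rw [h1, hq0]
      have hsum : ∑ j ∈ Finset.Ico (1 - d) 1, (S j * p - C j * (1 - p)) = 0 := by
        apply Finset.sum_eq_zero
        intro j hj
        have hj0 : j ≤ 0 := by
          have := (Finset.mem_Ico.mp hj).2; omega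
        rw [hS0 j hj0, hC0 j hj0]; ring
      rw [hsum]; simp
    exact aux_bound_stmt6 γ δ hγ hδ q0 S C X Qr Qhat hS hC hX hQinit hQrec hpolC hpolS
      1 le_rfl hacc1 (by rw [hQhat1]; linarith)
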